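/- For every natural number N ≥ 2 there exist a quantum operation Φ_N on 2^N × 2^N complex matrices satisfying the dephasing-covariance condition Φ_N∘Δ = Δ∘Φ_N, and a 2^N × 2^N density matrix ρ_N, such that C_{l1}(Φ_N(ρ_N)) > C_{l1}(ρ_N). That is, the l1-coherence is not monotone under DIO (hence not under MIO) on N-qubit systems for any N ≥ 2. -/

import Mathlib

open Matrix BigOperators ComplexOrder

/-- The l1-coherence of a matrix: the sum of the absolute values of its
off-diagonal entries. -/
noncomputable def Cl1 {n : ℕ} (A : Matrix (Fin n) (Fin n) ℂ) : ℝ :=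
  ∑ i, ∑ j, if i ≠ j then ‖A i j‖ else 0

/-- A density matrix: positive semidefinite with trace 1. -/
def IsDensity {n : ℕ} (ρ : Matrix (Fin n) (Fin n) ℂ) : Prop :=
  ρ.PosSemidef ∧ ρ.trace = 1

/-- A quantum operation (CPTP map) given by a finite family of Kraus operators. -/
def IsQuantumOp {n : ℕ} (Φ : Matrix (Fin n) (Fin n) ℂ → Matrix (Fin n) (Fin n) ℂ) : Prop :=
  ∃ (m : ℕ) (K : Fin m → Matrix (Fin n) (Fin n) ℂ),
    (∑ i, (K i)ᴴ * K i) = 1 ∧ ∀ ρ, Φ ρ = ∑ i, K i * ρ * (K i)ᴴ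

/-- The dephasing map `Δ`, keeping only the diagonal part of a matrix. -/
def Deph {n : ℕ} (A : Matrix (Fin n) (Fin n) ℂ) : Matrix (Fin n) (Fin n) ℂ :=
  Matrix.of fun i j => if i = j then A i j else 0



set_option maxHeartbeats 1000000

noncomputable section
namespace L1C

@[simp] lemma vecTail_fn_const {α : Type*} {n : ℕ} (a : α) :
    vecTail (fun _ : Fin (n + 1) => a) = fun _ => a := by
  funext i; simp [vecTail]

def Deph' {ι : Type*} [DecidableEq ι] (A : Matrix ι ι ℂ) : Matrix ι ι ℂ :=
  Matrix.of fun i j => if i = j then A i j else 0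

/-- eigenvectors of W (unnormalized, integer entries, as complex row vectors) -/
def v : Fin 4 → Fin 4 → ℂ := ![![4,4,-1,-1], ![1,1,4,4], ![1,-1,0,0], ![0,0,1,-1]]

/-- coefficients c_{kl} -/
def cc : Fin 4 → Fin 4 → ℝ :=
  ![![1/2176, 0, 0, 15/2176],
    ![0, 1/2448, 1/144, 1/1224],
    ![0, 1/144, 17/144, 1/72],
    ![15/2176, 1/1224, 1/72, 121/1152]]

lemma cc_nonneg (k l : Fin 4) : 0 ≤ cc k l := by
  fin_cases k <;> fin_cases l <;> norm_num [cc]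

lemma v_star (k : Fin 4) : star (v k) = v k := by
  funext i
  fin_cases k <;> fin_cases i <;> simp [v] <;> norm_num

lemma vmv_conjT (a b : Fin 4 → ℂ) : (vecMulVec a b)ᴴ = vecMulVec (star b) (star a) := by
  ext i j
  simp [vecMulVec_apply, conjTranspose_apply, mul_comm]

lemma vmv_mul_vmv (a b c d : Fin 4 → ℂ) :
    vecMulVec a b * vecMulVec c d = (b ⬝ᵥ c) • vecMulVec a d := by
  ext i j
  simp [vecMulVec_apply, Matrix.mul_apply, dotProduct, Finset.sum_mul, Finset.mul_sum]
  apply Finset.sum_congr rfl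
  intro x _
  ring

def B4 (k l : Fin 4) : Matrix (Fin 4) (Fin 4) ℂ := vecMulVec (v l) (v k)

lemma B4_conj_mul (k l : Fin 4) :
    (B4 k l)ᴴ * B4 k l = (v l ⬝ᵥ v l) • vecMulVec (v k) (v k) := by
  rw [B4, vmv_conjT, v_star, v_star, vmv_mul_vmv]

lemma B4_sandwich (k l : Fin 4) (A : Matrix (Fin 4) (Fin 4) ℂ) :
    B4 k l * A * (B4 k l)ᴴ = (v k ⬝ᵥ (A *ᵥ v k)) • vecMulVec (v l) (v l) := by
  rw [B4, vmv_conjT, v_star, v_star]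
  have : A * vecMulVec (v k) (v l) = vecMulVec (A *ᵥ v k) (v l) := by
    ext i j
    simp [vecMulVec_apply, Matrix.mul_apply, mulVec, dotProduct, Finset.sum_mul]
    apply Finset.sum_congr rfl; intro x _; ring
  rw [Matrix.mul_assoc, this, vmv_mul_vmv]

lemma vNorm : (v 0 ⬝ᵥ v 0) = 34 ∧ (v 1 ⬝ᵥ v 1) = 34 ∧ (v 2 ⬝ᵥ v 2) = 2 ∧ (v 3 ⬝ᵥ v 3) = 2 := by
  refine ⟨?_, ?_, ?_, ?_⟩ <;> · simp [dotProduct, v, Fin.sum_univ_four]; norm_num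

lemma sum_ccB : ∑ k : Fin 4, ∑ l : Fin 4, ((cc k l : ℝ) : ℂ) • ((B4 k l)ᴴ * B4 k l) = 1 := by
  simp only [B4_conj_mul]
  obtain ⟨h0, h1, h2, h3⟩ := vNorm
  simp only [Fin.sum_univ_four, h0, h1, h2, h3]
  ext i j
  fin_cases i <;> fin_cases j <;>
    simp [cc, vecMulVec_apply, v, Matrix.one_apply, smul_eq_mul] <;> norm_num

end L1C

noncomputable section
namespace L1C

def K4 (k l : Fin 4) : Matrix (Fin 4) (Fin 4) ℂ := (Real.sqrt (cc k l) : ℂ) • B4 k l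

lemma K4_sandwich (k l : Fin 4) (A : Matrix (Fin 4) (Fin 4) ℂ) :
    K4 k l * A * (K4 k l)ᴴ = ((cc k l : ℝ) : ℂ) • (B4 k l * A * (B4 k l)ᴴ) := by
  simp only [K4, conjTranspose_smul, smul_mul_assoc, mul_smul_comm, smul_smul]
  rw [Complex.star_def, Complex.conj_ofReal, ← Complex.ofReal_mul,
    Real.mul_self_sqrt (cc_nonneg k l)]

lemma K4_conj_mul (k l : Fin 4) :
    (K4 k l)ᴴ * K4 k l = ((cc k l : ℝ) : ℂ) • ((B4 k l)ᴴ * B4 k l) := by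
  simp only [K4, conjTranspose_smul, smul_mul_assoc, mul_smul_comm, smul_smul]
  rw [Complex.star_def, Complex.conj_ofReal, ← Complex.ofReal_mul,
    Real.mul_self_sqrt (cc_nonneg k l)]

lemma K4_tp : ∑ k : Fin 4, ∑ l : Fin 4, (K4 k l)ᴴ * K4 k l = 1 := by
  simp only [K4_conj_mul]; exact sum_ccB

def Phi4 (A : Matrix (Fin 4) (Fin 4) ℂ) : Matrix (Fin 4) (Fin 4) ℂ :=
  ∑ k : Fin 4, ∑ l : Fin 4, ((cc k l : ℝ) : ℂ) • (B4 k l * A * (B4 k l)ᴴ)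

lemma q_deph (k : Fin 4) (A : Matrix (Fin 4) (Fin 4) ℂ) :
    v k ⬝ᵥ (Deph' A *ᵥ v k) = ∑ x, v k x * A x x * v k x := by
  simp only [Deph', dotProduct, mulVec, Matrix.of_apply]
  apply Finset.sum_congr rfl
  intro x _
  rw [show (∑ y, (if x = y then A x y else 0) * v k y) = A x x * v k x by
    rw [Finset.sum_eq_single x]
    · simp
    · intro b _ hb; simp [Ne.symm hb]
    · simp]
  ring

lemma phi4_dio (A : Matrix (Fin 4) (Fin 4) ℂ) : Phi4 (Deph' A) = Deph' (Phi4 A) := by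
  unfold Phi4
  simp only [B4_sandwich, q_deph]
  ext i j
  by_cases hij : i = j
  · subst hij
    simp only [Fin.sum_univ_four, Deph', Matrix.of_apply, if_pos rfl, Matrix.sum_apply,
      Matrix.smul_apply, vecMulVec_apply, smul_eq_mul, dotProduct, mulVec]
    fin_cases i <;> · simp [v, cc]; ring
  · simp only [Fin.sum_univ_four, Deph', Matrix.of_apply, if_neg hij, Matrix.sum_apply,
      Matrix.smul_apply, vecMulVec_apply, smul_eq_mul]
    fin_cases i <;> fin_cases j <;> simp_all <;>
      · simp [v, cc]; ring

end L1C

noncomputable section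
namespace L1C

def rho4 : Matrix (Fin 4) (Fin 4) ℂ :=
  !![((1:ℝ)/2 : ℂ), ((-(1/2) : ℝ) : ℂ), 0, 0;
     ((-(1/2) : ℝ) : ℂ), ((1:ℝ)/2 : ℂ), 0, 0;
     0, 0, 0, 0; 0, 0, 0, 0]

def A4 : Matrix (Fin 4) (Fin 4) ℂ :=
  !![(1/2 : ℂ), (-(1/2) : ℂ), 0, 0;
     (1/2 : ℂ), (-(1/2) : ℂ), 0, 0;
     0, 0, 0, 0; 0, 0, 0, 0]

lemma rho4_eq : rho4 = A4ᴴ * A4 := by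
  ext i j
  fin_cases i <;> fin_cases j <;>
    simp [rho4, A4, Matrix.mul_apply, Fin.sum_univ_four, Matrix.cons_val', Matrix.cons_val_zero, Matrix.cons_val_one, Matrix.head_cons, Matrix.head_fin_const, Matrix.empty_val', Matrix.cons_val_fin_one, Matrix.of_apply, vecTail_fn_const, map_inv₀, map_ofNat, Complex.conj_ofReal] <;> norm_num

lemma rho4_trace : rho4.trace = 1 := by
  simp [Matrix.trace, Matrix.diag, rho4, Fin.sum_univ_four, Matrix.cons_val', Matrix.cons_val_zero, Matrix.cons_val_one, Matrix.head_cons, Matrix.head_fin_const, Matrix.empty_val', Matrix.cons_val_fin_one, Matrix.of_apply, vecTail_fn_const, map_inv₀, map_ofNat, Complex.conj_ofReal]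
  norm_num

def sig : Matrix (Fin 4) (Fin 4) ℂ :=
  !![((1/4:ℝ):ℂ), ((-(2/9):ℝ):ℂ), ((1/18:ℝ):ℂ), ((1/18:ℝ):ℂ);
     ((-(2/9):ℝ):ℂ), ((1/4:ℝ):ℂ), ((1/18:ℝ):ℂ), ((1/18:ℝ):ℂ);
     ((1/18:ℝ):ℂ), ((1/18:ℝ):ℂ), ((1/4:ℝ):ℂ), ((7/36:ℝ):ℂ);
     ((1/18:ℝ):ℂ), ((1/18:ℝ):ℂ), ((7/36:ℝ):ℂ), ((1/4:ℝ):ℂ)]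

lemma phi4_rho4 : Phi4 rho4 = sig := by
  unfold Phi4
  simp only [B4_sandwich]
  ext i j
  fin_cases i <;> fin_cases j <;>
    · simp [Fin.sum_univ_four, dotProduct, mulVec, rho4, v, cc, sig, vecMulVec_apply, Matrix.cons_val', Matrix.cons_val_zero, Matrix.cons_val_one, Matrix.head_cons, Matrix.head_fin_const, Matrix.empty_val', Matrix.cons_val_fin_one, Matrix.of_apply, vecTail_fn_const, map_inv₀, map_ofNat, Complex.conj_ofReal]
      norm_num

lemma cl1_rho4 : (∑ i, ∑ j, if i ≠ j then ‖rho4 i j‖ else 0) = 1 := by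
  simp [Fin.sum_univ_four, rho4, Complex.norm_real, Matrix.cons_val', Matrix.cons_val_zero, Matrix.cons_val_one, Matrix.head_cons, Matrix.head_fin_const, Matrix.empty_val', Matrix.cons_val_fin_one, Matrix.of_apply, vecTail_fn_const, map_inv₀, map_ofNat, Complex.conj_ofReal]
  norm_num

lemma cl1_sig : (∑ i, ∑ j, if i ≠ j then ‖sig i j‖ else 0) = 23/18 := by
  simp [Fin.sum_univ_four, sig, Complex.norm_real, Matrix.cons_val', Matrix.cons_val_zero, Matrix.cons_val_one, Matrix.head_cons, Matrix.head_fin_const, Matrix.empty_val', Matrix.cons_val_fin_one, Matrix.of_apply, vecTail_fn_const, map_inv₀, map_ofNat, Complex.conj_ofReal]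
  norm_num

end L1C


noncomputable section
namespace L1C

variable {r : ℕ}

def lift (M : Matrix (Fin 4) (Fin 4) ℂ) : Matrix (Fin 4 ⊕ Fin r) (Fin 4 ⊕ Fin r) ℂ :=
  fromBlocks M 0 0 0

def Qb : Matrix (Fin 4 ⊕ Fin r) (Fin 4 ⊕ Fin r) ℂ := fromBlocks 0 0 0 1

lemma lift_conjT (M : Matrix (Fin 4) (Fin 4) ℂ) : (lift (r := r) M)ᴴ = lift Mᴴ := by
  simp [lift, fromBlocks_conjTranspose]

lemma lift_mul (M N : Matrix (Fin 4) (Fin 4) ℂ) :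
    lift (r := r) M * lift N = lift (M * N) := by
  simp [lift, fromBlocks_multiply]

lemma lift_add (M N : Matrix (Fin 4) (Fin 4) ℂ) :
    lift (r := r) M + lift N = lift (M + N) := by
  simp [lift, fromBlocks_add]

lemma lift_sandwich (K : Matrix (Fin 4) (Fin 4) ℂ) (X : Matrix (Fin 4 ⊕ Fin r) (Fin 4 ⊕ Fin r) ℂ) :
    lift K * X * (lift K)ᴴ = lift (K * X.toBlocks₁₁ * Kᴴ) := by
  rw [lift_conjT, ← fromBlocks_toBlocks X]
  simp [lift, fromBlocks_multiply, Matrix.mul_assoc]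

lemma Qb_conjT : (Qb (r := r))ᴴ = Qb := by
  simp [Qb, fromBlocks_conjTranspose]

lemma Qb_sandwich (X : Matrix (Fin 4 ⊕ Fin r) (Fin 4 ⊕ Fin r) ℂ) :
    Qb * X * Qbᴴ = fromBlocks 0 0 0 X.toBlocks₂₂ := by
  rw [Qb_conjT, ← fromBlocks_toBlocks X]
  simp [Qb, fromBlocks_multiply]

lemma Qb_mul_Qb : (Qb (r := r))ᴴ * Qb = Qb := by
  rw [Qb_conjT]; simp [Qb, fromBlocks_multiply]

lemma Deph'_fromBlocks (A : Matrix (Fin 4) (Fin 4) ℂ) (D : Matrix (Fin r) (Fin r) ℂ) :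
    Deph' (fromBlocks A 0 0 D) = fromBlocks (Deph' A) 0 0 (Deph' D) := by
  ext i j
  rcases i with i | i <;> rcases j with j | j <;>
    simp [Deph', fromBlocks]

end L1C

noncomputable section
namespace L1C
variable {r : ℕ}

def Kb : Fin 17 → Matrix (Fin 4 ⊕ Fin r) (Fin 4 ⊕ Fin r) ℂ :=
  ![lift (K4 0 0), lift (K4 0 1), lift (K4 0 2), lift (K4 0 3),
    lift (K4 1 0), lift (K4 1 1), lift (K4 1 2), lift (K4 1 3),
    lift (K4 2 0), lift (K4 2 1), lift (K4 2 2), lift (K4 2 3),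
    lift (K4 3 0), lift (K4 3 1), lift (K4 3 2), lift (K4 3 3), Qb]

lemma lift_one_add_Qb : lift (r := r) 1 + Qb = 1 := by
  rw [← fromBlocks_one]; simp [lift, Qb, fromBlocks_add]

lemma Kb_tp : ∑ m : Fin 17, (Kb (r := r) m)ᴴ * Kb m = 1 := by
  have h4 := K4_tp
  simp only [Fin.sum_univ_four] at h4
  rw [← lift_one_add_Qb, ← h4]
  simp only [Fin.sum_univ_succ, Fin.sum_univ_zero, add_zero, Kb,
    Matrix.cons_val_zero, Matrix.cons_val_one, Matrix.head_cons, Matrix.cons_val_succ,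
    lift_conjT, lift_mul, Qb_mul_Qb, ← lift_add]
  abel

end L1C

noncomputable section
namespace L1C
variable {r : ℕ}

lemma fromBlocks_split (A : Matrix (Fin 4) (Fin 4) ℂ) (D : Matrix (Fin r) (Fin r) ℂ) :
    fromBlocks A 0 0 D = lift A + fromBlocks 0 0 0 D := by
  simp [lift, fromBlocks_add]

def PhiB (X : Matrix (Fin 4 ⊕ Fin r) (Fin 4 ⊕ Fin r) ℂ) : Matrix (Fin 4 ⊕ Fin r) (Fin 4 ⊕ Fin r) ℂ :=
  ∑ m : Fin 17, Kb m * X * (Kb m)ᴴ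

lemma PhiB_eq (X : Matrix (Fin 4 ⊕ Fin r) (Fin 4 ⊕ Fin r) ℂ) :
    PhiB X = fromBlocks (Phi4 X.toBlocks₁₁) 0 0 X.toBlocks₂₂ := by
  have h4 : Phi4 X.toBlocks₁₁ =
      ∑ k : Fin 4, ∑ l : Fin 4, K4 k l * X.toBlocks₁₁ * (K4 k l)ᴴ := by
    unfold Phi4; simp only [K4_sandwich]
  rw [fromBlocks_split, h4]
  simp only [Fin.sum_univ_four]
  unfold PhiB
  simp only [Fin.sum_univ_succ, Fin.sum_univ_zero, add_zero, Kb,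
    Matrix.cons_val_zero, Matrix.cons_val_one, Matrix.head_cons, Matrix.cons_val_succ,
    lift_sandwich, Qb_sandwich, ← lift_add]
  abel

lemma PhiB_dio (X : Matrix (Fin 4 ⊕ Fin r) (Fin 4 ⊕ Fin r) ℂ) :
    PhiB (Deph' X) = Deph' (PhiB X) := by
  have h11 : (Deph' X).toBlocks₁₁ = Deph' X.toBlocks₁₁ := by
    ext i j; simp [Deph', toBlocks₁₁]
  have h22 : (Deph' X).toBlocks₂₂ = Deph' X.toBlocks₂₂ := by
    ext i j; simp [Deph', toBlocks₂₂]
  rw [PhiB_eq, PhiB_eq, h11, h22, phi4_dio, Deph'_fromBlocks]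

end L1C

noncomputable section
namespace L1C
variable {n r : ℕ}

def Kfin (e : Fin n ≃ Fin 4 ⊕ Fin r) (m : Fin 17) : Matrix (Fin n) (Fin n) ℂ :=
  (Kb m).submatrix e e

def PhiF (e : Fin n ≃ Fin 4 ⊕ Fin r) (ρ : Matrix (Fin n) (Fin n) ℂ) : Matrix (Fin n) (Fin n) ℂ :=
  ∑ m : Fin 17, Kfin e m * ρ * (Kfin e m)ᴴ

lemma submatrix_sum (e : Fin n ≃ Fin 4 ⊕ Fin r)
    (F : Fin 17 → Matrix (Fin 4 ⊕ Fin r) (Fin 4 ⊕ Fin r) ℂ) :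
    (∑ m : Fin 17, F m).submatrix e e = ∑ m : Fin 17, (F m).submatrix e e := by
  ext i j
  simp [Matrix.submatrix_apply, Matrix.sum_apply]

lemma sub_resub (e : Fin n ≃ Fin 4 ⊕ Fin r) (ρ : Matrix (Fin n) (Fin n) ℂ) :
    (ρ.submatrix (e.symm : Fin 4 ⊕ Fin r → Fin n) e.symm).submatrix e e = ρ := by
  rw [Matrix.submatrix_submatrix]
  simp [Equiv.symm_comp_self]

lemma PhiF_eq (e : Fin n ≃ Fin 4 ⊕ Fin r) (ρ : Matrix (Fin n) (Fin n) ℂ) :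
    PhiF e ρ = (PhiB (ρ.submatrix (e.symm : Fin 4 ⊕ Fin r → Fin n) e.symm)).submatrix e e := by
  unfold PhiF PhiB
  rw [submatrix_sum]
  apply Finset.sum_congr rfl
  intro m _
  conv_lhs => rw [← sub_resub e ρ]
  rw [Kfin, Matrix.conjTranspose_submatrix, Matrix.submatrix_mul_equiv,
    Matrix.submatrix_mul_equiv]

lemma PhiF_tp (e : Fin n ≃ Fin 4 ⊕ Fin r) :
    ∑ m : Fin 17, (Kfin e m)ᴴ * Kfin e m = 1 := by
  have : ∀ m : Fin 17, (Kfin e m)ᴴ * Kfin e m = ((Kb m)ᴴ * Kb m).submatrix e e := by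
    intro m
    rw [Kfin, Matrix.conjTranspose_submatrix, Matrix.submatrix_mul_equiv]
  simp only [this]
  rw [← submatrix_sum, Kb_tp, Matrix.submatrix_one_equiv]

lemma deph_sub (e : Fin n ≃ Fin 4 ⊕ Fin r) (M : Matrix (Fin 4 ⊕ Fin r) (Fin 4 ⊕ Fin r) ℂ) :
    Deph (M.submatrix e e) = (Deph' M).submatrix e e := by
  ext i j
  simp only [Deph, Deph', Matrix.of_apply, Matrix.submatrix_apply]
  by_cases h : i = j
  · simp [h]
  · rw [if_neg h, if_neg (fun he => h (e.injective he))]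

lemma deph_sub' (e : Fin n ≃ Fin 4 ⊕ Fin r) (A : Matrix (Fin n) (Fin n) ℂ) :
    (Deph A).submatrix (e.symm : Fin 4 ⊕ Fin r → Fin n) e.symm
      = Deph' (A.submatrix (e.symm : Fin 4 ⊕ Fin r → Fin n) e.symm) := by
  ext i j
  simp only [Deph, Deph', Matrix.of_apply, Matrix.submatrix_apply]
  by_cases h : i = j
  · simp [h]
  · rw [if_neg (fun he => h (e.symm.injective he)), if_neg h]

lemma PhiF_dio (e : Fin n ≃ Fin 4 ⊕ Fin r) (A : Matrix (Fin n) (Fin n) ℂ) :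
    PhiF e (Deph A) = Deph (PhiF e A) := by
  rw [PhiF_eq, PhiF_eq, deph_sub' e A, PhiB_dio, ← deph_sub]

lemma cl1_sub (e : Fin n ≃ Fin 4 ⊕ Fin r) (M : Matrix (Fin 4 ⊕ Fin r) (Fin 4 ⊕ Fin r) ℂ) :
    Cl1 (M.submatrix e e)
      = ∑ x : Fin 4 ⊕ Fin r, ∑ y : Fin 4 ⊕ Fin r, if x ≠ y then ‖M x y‖ else 0 := by
  unfold Cl1
  refine Fintype.sum_equiv e _ _ (fun i => ?_)
  refine Fintype.sum_equiv e _ _ (fun j => ?_)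
  simp only [Matrix.submatrix_apply]
  by_cases h : i = j
  · simp [h]
  · rw [if_pos h, if_pos (fun he => h (e.injective he))]

lemma cl1_blocks (S : Matrix (Fin 4) (Fin 4) ℂ) :
    (∑ x : Fin 4 ⊕ Fin r, ∑ y : Fin 4 ⊕ Fin r,
        if x ≠ y then ‖(fromBlocks S 0 0 (0 : Matrix (Fin r) (Fin r) ℂ)) x y‖ else 0)
      = ∑ i : Fin 4, ∑ j : Fin 4, if i ≠ j then ‖S i j‖ else 0 := by
  rw [Fintype.sum_sum_type]
  have h2 : ∀ x : Fin 4 ⊕ Fin r, (∑ b : Fin r,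
      (if x ≠ Sum.inr b then ‖(fromBlocks S 0 0 (0 : Matrix (Fin r) (Fin r) ℂ)) x (Sum.inr b)‖ else 0)) = 0 := by
    intro x
    apply Finset.sum_eq_zero
    intro b _
    rcases x with a | a <;> simp [fromBlocks]
  have hmain : ∀ a : Fin 4, (∑ y : Fin 4 ⊕ Fin r,
      if Sum.inl a ≠ y then ‖(fromBlocks S 0 0 (0 : Matrix (Fin r) (Fin r) ℂ)) (Sum.inl a) y‖ else 0)
      = ∑ j : Fin 4, if a ≠ j then ‖S a j‖ else 0 := by
    intro a
    rw [Fintype.sum_sum_type, h2 (Sum.inl a), add_zero]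
    apply Finset.sum_congr rfl
    intro j _
    by_cases h : a = j
    · simp [h]
    · rw [if_pos h, if_pos (by simp [h])]
      simp [fromBlocks]
  have hz : ∀ b : Fin r, (∑ y : Fin 4 ⊕ Fin r,
      if Sum.inr b ≠ y then ‖(fromBlocks S 0 0 (0 : Matrix (Fin r) (Fin r) ℂ)) (Sum.inr b) y‖ else 0) = 0 := by
    intro b
    rw [Fintype.sum_sum_type, h2 (Sum.inr b), add_zero]
    apply Finset.sum_eq_zero
    intro a _
    simp [fromBlocks]
  simp only [hmain, hz]
  simp

lemma trace_sub (e : Fin n ≃ Fin 4 ⊕ Fin r) (M : Matrix (Fin 4 ⊕ Fin r) (Fin 4 ⊕ Fin r) ℂ) :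
    (M.submatrix e e).trace = M.trace := by
  unfold Matrix.trace Matrix.diag
  exact Fintype.sum_equiv e _ _ (fun i => rfl)

def rhoF (e : Fin n ≃ Fin 4 ⊕ Fin r) : Matrix (Fin n) (Fin n) ℂ :=
  (fromBlocks rho4 0 0 (0 : Matrix (Fin r) (Fin r) ℂ)).submatrix e e

lemma rhoF_psd (e : Fin n ≃ Fin 4 ⊕ Fin r) : (rhoF e).PosSemidef := by
  have h : rhoF e = ((lift A4).submatrix e e)ᴴ * ((lift A4).submatrix e e) := by
    rw [Matrix.conjTranspose_submatrix, Matrix.submatrix_mul_equiv, lift_conjT, lift_mul]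
    rw [rhoF, lift, ← rho4_eq]
  rw [h]
  exact Matrix.posSemidef_conjTranspose_mul_self _

lemma rhoF_trace (e : Fin n ≃ Fin 4 ⊕ Fin r) : (rhoF e).trace = 1 := by
  rw [rhoF, trace_sub]
  unfold Matrix.trace Matrix.diag
  rw [Fintype.sum_sum_type]
  have : (∑ b : Fin r, fromBlocks rho4 0 0 (0 : Matrix (Fin r) (Fin r) ℂ) (Sum.inr b) (Sum.inr b)) = 0 := by
    apply Finset.sum_eq_zero; intro b _; simp [fromBlocks]
  rw [this, add_zero]
  have := rho4_trace
  unfold Matrix.trace Matrix.diag at this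
  simpa [fromBlocks] using this

lemma cl1_rhoF (e : Fin n ≃ Fin 4 ⊕ Fin r) : Cl1 (rhoF e) = 1 := by
  rw [rhoF, cl1_sub, cl1_blocks, cl1_rho4]

lemma PhiF_rhoF (e : Fin n ≃ Fin 4 ⊕ Fin r) :
    PhiF e (rhoF e) = (fromBlocks sig 0 0 (0 : Matrix (Fin r) (Fin r) ℂ)).submatrix e e := by
  rw [PhiF_eq]
  congr 1
  rw [rhoF, Matrix.submatrix_submatrix]
  simp only [Equiv.self_comp_symm, Matrix.submatrix_id_id]
  rw [PhiB_eq]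
  simp [toBlocks_fromBlocks₁₁, toBlocks_fromBlocks₂₂, phi4_rho4]

lemma cl1_PhiF_rhoF (e : Fin n ≃ Fin 4 ⊕ Fin r) : Cl1 (PhiF e (rhoF e)) = 23/18 := by
  rw [PhiF_rhoF, cl1_sub, cl1_blocks, cl1_sig]

end L1C
end

theorem l1_not_monotone_under_DIO_N_qubits (N : ℕ) (hN : 2 ≤ N) :
    ∃ Φ : Matrix (Fin (2 ^ N)) (Fin (2 ^ N)) ℂ → Matrix (Fin (2 ^ N)) (Fin (2 ^ N)) ℂ,
      IsQuantumOp Φ ∧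
      (∀ A : Matrix (Fin (2 ^ N)) (Fin (2 ^ N)) ℂ, Φ (Deph A) = Deph (Φ A)) ∧
      ∃ ρ : Matrix (Fin (2 ^ N)) (Fin (2 ^ N)) ℂ, IsDensity ρ ∧ Cl1 ρ < Cl1 (Φ ρ) := by
  have h4 : 4 ≤ 2 ^ N := by
    calc (4:ℕ) = 2 ^ 2 := by norm_num
    _ ≤ 2 ^ N := Nat.pow_le_pow_right (by norm_num) hN
  have hd : 2 ^ N = 4 + (2 ^ N - 4) := by omega
  let e : Fin (2 ^ N) ≃ Fin 4 ⊕ Fin (2 ^ N - 4) :=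
    (finCongr hd).trans finSumFinEquiv.symm
  refine ⟨L1C.PhiF e, ⟨17, L1C.Kfin e, L1C.PhiF_tp e, fun ρ => rfl⟩,
    L1C.PhiF_dio e, L1C.rhoF e, ⟨L1C.rhoF_psd e, L1C.rhoF_trace e⟩, ?_⟩
  rw [L1C.cl1_rhoF e, L1C.cl1_PhiF_rhoF e]
  norm_num
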